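/- For all real constants A ≥ 0, K ≥ 0, c₁ > 0, c₂ > 0, there exist δ₀ ∈ (0,1) and c₄ > 0 such that for every δ ∈ (0, δ₀) and every t ≥ δ^{−5}, setting s := δ² t, one has for all x ∈ [−δ√t, A]: c₂ (log s − x − K) s^{−3/2} e^{√2 (x+K) − (x+K)²/(2s)} ≥ c₄ δ^{−3} · c₁ (log t − x − K) t^{−3/2} e^{√2 (x+K)}. -/
import Mathlib

open Real

set_option maxHeartbeats 1000000

private lemma ratio_aux_cube (B : ℝ) (h : 1 ≤ B) : B^2 ≤ (B+1)^3 := by nlinarith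

/-- Analytic content of Lemma 3.5 (ratio-R): for `s = δ² t`, uniformly over
`x ∈ [−δ√t, A]`, the lower bound on `P(x + M_s − √2 s ≥ −K)` dominates
`c₄ δ⁻³` times the upper bound on `P(x + M_t − √2 t ≥ −K)`. -/
theorem ratio_R_estimate (A K c₁ c₂ : ℝ) (hA : 0 ≤ A) (hK : 0 ≤ K)
    (hc₁ : 0 < c₁) (hc₂ : 0 < c₂) :
    ∃ δ₀ ∈ Set.Ioo (0 : ℝ) 1, ∃ c₄ > (0 : ℝ),
      ∀ δ ∈ Set.Ioo (0 : ℝ) δ₀, ∀ t : ℝ, δ ^ (-5 : ℤ) ≤ t →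
        ∀ x ∈ Set.Icc (-(δ * Real.sqrt t)) A,
          c₄ * δ ^ (-3 : ℤ) *
              (c₁ * (Real.log t - x - K) * t ^ (-(3 / 2) : ℝ) *
                Real.exp (Real.sqrt 2 * (x + K)))
            ≤ c₂ * (Real.log (δ ^ 2 * t) - x - K) * (δ ^ 2 * t) ^ (-(3 / 2) : ℝ) *
                Real.exp (Real.sqrt 2 * (x + K) - (x + K) ^ 2 / (2 * (δ ^ 2 * t))) := by
  set B : ℝ := A + K + 1 with hBdef
  have hB1 : 1 ≤ B := by simp only [hBdef]; linarith
  refine ⟨Real.exp (-B), ⟨Real.exp_pos _, by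
      rw [Real.exp_lt_one_iff]; linarith⟩,
    (2/5) * Real.exp (-1) * c₂ / c₁, by positivity, ?_⟩
  rintro δ ⟨hδ0, hδ1⟩ t ht x ⟨hx1, hx2⟩
  have hδlt1 : δ < 1 := hδ1.trans (by rw [Real.exp_lt_one_iff]; linarith)
  have hlogδ : Real.log δ < -B := (Real.log_lt_iff_lt_exp hδ0).mpr hδ1
  have ht0 : (0:ℝ) < t := lt_of_lt_of_le (zpow_pos hδ0 _) ht
  have hlogt : -5 * Real.log δ ≤ Real.log t := by
    have h := Real.log_le_log (zpow_pos hδ0 _) ht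
    rw [Real.log_zpow] at h
    push_cast at h
    linarith
  have hlogt5B : 5 * B ≤ Real.log t := by nlinarith
  have hxK : x + K ≤ B - 1 := by simp only [hBdef]; linarith
  have hsqt : Real.sqrt t ^ 2 = t := Real.sq_sqrt ht0.le
  have hxKlow : -(δ * Real.sqrt t) ≤ x + K := by linarith
  have hst : 0 < δ^2 * t := by positivity
  -- (x+K)^2 ≤ δ²t + B²
  have hsq : (x+K)^2 ≤ δ^2 * t + B^2 := by
    rcases le_or_gt 0 (x+K) with h | h
    · nlinarith
    · have h2 : (x+K)^2 ≤ (δ * Real.sqrt t)^2 := by nlinarith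
      nlinarith [sq_nonneg B]
  -- B² ≤ δ²t
  have hδ3pos : 0 < δ^3 := by positivity
  have h5 : 1 ≤ δ^5 * t := by
    have hz5 : δ ^ (-5:ℤ) = (δ^5)⁻¹ := by
      rw [zpow_neg]; norm_cast
    rw [hz5] at ht
    calc (1:ℝ) = δ^5 * (δ^5)⁻¹ := (mul_inv_cancel₀ (by positivity)).symm
    _ ≤ δ^5 * t := by
        apply mul_le_mul_of_nonneg_left ht (by positivity)
  have hs3 : (δ^3)⁻¹ ≤ δ^2 * t := by
    nlinarith [mul_inv_cancel₀ (show (δ^3:ℝ) ≠ 0 by positivity),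
      inv_nonneg.mpr hδ3pos.le]
  have hδ3small : δ^3 ≤ Real.exp (-B)^3 :=
    pow_le_pow_left₀ hδ0.le hδ1.le 3
  have hexpB3 : Real.exp (-B)^3 = (Real.exp B ^ 3)⁻¹ := by
    rw [Real.exp_neg, inv_pow]
  have hE3 : Real.exp B ^ 3 ≤ (δ^3)⁻¹ := by
    rw [hexpB3] at hδ3small
    have hEpos : 0 < Real.exp B ^ 3 := by positivity
    nlinarith [mul_inv_cancel₀ (show (Real.exp B ^ 3:ℝ) ≠ 0 from hEpos.ne'),
      mul_inv_cancel₀ (show (δ^3:ℝ) ≠ 0 by positivity),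
      inv_nonneg.mpr hδ3pos.le]
  have hBexp : B^2 ≤ Real.exp B ^ 3 := by
    have h := pow_le_pow_left₀ (by linarith : (0:ℝ) ≤ B + 1)
      (Real.add_one_le_exp B) 3
    have h2 : B^2 ≤ (B+1)^3 := ratio_aux_cube B hB1
    linarith
  have hB2s : B^2 ≤ δ^2 * t := le_trans hBexp (le_trans hE3 hs3)
  -- q ≤ 1
  have hq1 : (x+K)^2 / (2*(δ^2*t)) ≤ 1 := by
    rw [div_le_one (by positivity)]
    nlinarith
  -- log split
  have hlogs : Real.log (δ^2*t) = 2 * Real.log δ + Real.log t := by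
    rw [Real.log_mul (by positivity) ht0.ne', Real.log_pow]
    push_cast; ring
  have hL0 : 0 ≤ Real.log t - x - K := by linarith
  have hLs : (2/5) * (Real.log t - x - K) ≤ Real.log (δ^2*t) - x - K := by
    rw [hlogs]; linarith
  -- core inequality
  set q : ℝ := (x+K)^2 / (2*(δ^2*t)) with hqdef
  have hq0 : 0 ≤ q := by positivity
  have hcore : ((2/5) * Real.exp (-1) * c₂ / c₁) * c₁ * (Real.log t - x - K)
      ≤ c₂ * (Real.log (δ^2*t) - x - K) * Real.exp (-q) := by
    have h1 : (2/5)*(Real.log t - x - K)*Real.exp (-1)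
        ≤ (2/5)*(Real.log t - x - K)*Real.exp (-q) :=
      mul_le_mul_of_nonneg_left (Real.exp_le_exp.mpr (by linarith)) (by linarith)
    have h2 : (2/5)*(Real.log t - x - K)*Real.exp (-q)
        ≤ (Real.log (δ^2*t) - x - K)*Real.exp (-q) :=
      mul_le_mul_of_nonneg_right hLs (Real.exp_pos _).le
    have h12 := h1.trans h2
    have h3 := mul_le_mul_of_nonneg_left h12 hc₂.le
    have hc : (2/5) * Real.exp (-1) * c₂ / c₁ * c₁ = (2/5) * Real.exp (-1) * c₂ :=
      div_mul_cancel₀ _ hc₁.ne'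
    rw [hc]
    nlinarith [h3]
  -- power and exp splits
  have hsplit : (δ^2*t) ^ (-(3/2) : ℝ) = δ ^ (-3:ℤ) * t ^ (-(3/2) : ℝ) := by
    rw [Real.mul_rpow (by positivity) ht0.le]
    congr 1
    rw [← Real.rpow_natCast δ 2, ← Real.rpow_mul hδ0.le, ← Real.rpow_intCast]
    norm_num
  have hesplit : Real.exp (Real.sqrt 2*(x+K) - q)
      = Real.exp (-q) * Real.exp (Real.sqrt 2*(x+K)) := by
    rw [← Real.exp_add]; ring_nf
  have hPpos : (0:ℝ) < δ ^ (-3:ℤ) * (t ^ (-(3/2):ℝ) * Real.exp (Real.sqrt 2 * (x+K))) := by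
    positivity
  calc (2/5) * Real.exp (-1) * c₂ / c₁ * δ ^ (-3:ℤ) *
        (c₁ * (Real.log t - x - K) * t ^ (-(3/2):ℝ) * Real.exp (Real.sqrt 2 * (x+K)))
      = (((2/5) * Real.exp (-1) * c₂ / c₁) * c₁ * (Real.log t - x - K)) *
        (δ ^ (-3:ℤ) * (t ^ (-(3/2):ℝ) * Real.exp (Real.sqrt 2 * (x+K)))) := by ring
    _ ≤ (c₂ * (Real.log (δ^2*t) - x - K) * Real.exp (-q)) *
        (δ ^ (-3:ℤ) * (t ^ (-(3/2):ℝ) * Real.exp (Real.sqrt 2 * (x+K)))) :=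
        mul_le_mul_of_nonneg_right hcore hPpos.le
    _ = c₂ * (Real.log (δ ^ 2 * t) - x - K) * (δ ^ 2 * t) ^ (-(3 / 2) : ℝ) *
        Real.exp (Real.sqrt 2 * (x + K) - (x + K) ^ 2 / (2 * (δ ^ 2 * t))) := by
        rw [hsplit, show Real.sqrt 2 * (x + K) - (x + K) ^ 2 / (2 * (δ ^ 2 * t))
          = Real.sqrt 2*(x+K) - q from rfl, hesplit]
        ring
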